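/- Let B = Borel(m) with max(m) = x_k and write w_k(B) for the number of minimal monomial generators of B with maximal variable x_k, and define b_i(B) = Σ_{j=1}^{n} binom(j−1, i)·w_j(B), where w_j(B) counts minimal generators of B with maximal variable x_j. Then for each i ≥ 1, b_{i−1}(Borel(m)) + b_i(Borel(m/x_k)) = binom(k, i)·w_k(Borel(m)). -/

import Mathlib

/-- The minimal monomial generators of the principal Borel ideal whose Borel
generator has weakly increasing factorization `I`: weakly increasing sequences
of positive integers, bounded termwise by `I`. -/
def borelGens (I : List ℕ) : Set (List ℕ) :=
  {l | l.length = I.length ∧ l.Chain' (· ≤ ·) ∧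
    ∀ t < l.length, 1 ≤ l.getD t 0 ∧ l.getD t 0 ≤ I.getD t 0}

/-- `w I j`: the number of minimal generators of `Borel(m)` (with factorization
`I`) whose maximal variable is `x_j`. -/
noncomputable def w (I : List ℕ) (j : ℕ) : ℕ :=
  Set.ncard {l ∈ borelGens I | l.getLast? = some j}

/-- `b n I i`: the `i`-th total Betti number of the principal Borel ideal,
via the Eliahou–Kervaire formula `b_i = Σ_{j=1}^n binom(j-1, i) w_j`. -/
noncomputable def b (n : ℕ) (I : List ℕ) (i : ℕ) : ℕ :=
  ∑ j ∈ Finset.Icc 1 n, Nat.choose (j - 1) i * w I j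

/-- hockey stick -/
lemma hockey (r k : ℕ) : ∑ j ∈ Finset.range k, (j.choose r) = k.choose (r+1) := by
  induction k with
  | zero => simp
  | succ k ih =>
    rw [Finset.sum_range_succ, ih, Nat.choose_succ_succ']; omega

lemma borelGens_finite (I : List ℕ) : (borelGens I).Finite := by
  set N := I.sum + 1 with hN
  have h1 : (borelGens I) ⊆ (List.map (Fin.val : Fin N → ℕ)) ''
      {l : List (Fin N) | l.length = I.length} := by
    rintro l ⟨hlen, -, hb⟩
    have hbound : ∀ t : Fin l.length, l[t.1] < N := by
      intro t
      have h := (hb t.1 t.2).2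
      rw [List.getD_eq_getElem l 0 t.2, List.getD_eq_getElem I 0 (hlen ▸ t.2)] at h
      have h2 : I[(t:ℕ)]'(hlen ▸ t.2) ≤ I.sum :=
        List.single_le_sum (by simp) _ (List.getElem_mem _)
      omega
    refine ⟨List.ofFn (fun t : Fin l.length => (⟨l[t.1], hbound t⟩ : Fin N)), by simp [hlen], ?_⟩
    rw [List.map_ofFn]
    exact List.ofFn_getElem
  exact ((List.finite_length_eq (Fin N) I.length).image _).subset h1

lemma borelGens_nil : borelGens [] = {[]} := by
  ext l
  simp only [borelGens, Set.mem_setOf_eq, List.length_nil, List.length_eq_zero_iff, Set.mem_singleton_iff]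
  constructor
  · rintro ⟨h, -, -⟩; exact h
  · rintro rfl; simp [List.Chain']

lemma mem_borelGens_append (I' : List ℕ) (k : ℕ) (l' : List ℕ) (j : ℕ) :
    (l' ++ [j]) ∈ borelGens (I' ++ [k]) ↔
      l' ∈ borelGens I' ∧ (∀ a ∈ l'.getLast?, a ≤ j) ∧ 1 ≤ j ∧ j ≤ k := by
  constructor
  · rintro ⟨hlen, hch, hb⟩
    simp only [List.length_append, List.length_singleton] at hlen
    have hlen' : l'.length = I'.length := by omega
    simp only [List.Chain'] at hch
    rw [List.isChain_append] at hch
    have hbj := hb l'.length (by simp)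
    rw [List.getD_append_right _ _ _ _ le_rfl] at hbj
    rw [hlen', List.getD_append_right _ _ _ _ le_rfl] at hbj
    simp at hbj
    refine ⟨⟨hlen', hch.1, fun t ht => ?_⟩, ?_, hbj⟩
    · have := hb t (by simp; omega)
      rwa [List.getD_append _ _ _ _ ht, List.getD_append _ _ _ _ (by omega)] at this
    · intro a ha
      exact hch.2.2 a ha j (by simp)
  · rintro ⟨⟨hlen', hch, hb⟩, hlast, hj1, hjk⟩
    refine ⟨by simp [hlen'], ?_, fun t ht => ?_⟩
    · simp only [List.Chain']
      rw [List.isChain_append]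
      exact ⟨hch, List.isChain_singleton j, fun x hx y hy => by simp at hy; subst hy; exact hlast x hx⟩
    · simp only [List.length_append, List.length_singleton] at ht
      rcases Nat.lt_or_ge t l'.length with h | h
      · rw [List.getD_append _ _ _ _ h, List.getD_append _ _ _ _ (hlen' ▸ h)]
        exact hb t h
      · have ht' : t = l'.length := by omega
        subst ht'
        rw [List.getD_append_right _ _ _ _ le_rfl]
        rw [hlen', List.getD_append_right _ _ _ _ le_rfl]
        simpa using ⟨hj1, hjk⟩

/-- elements of generators are ≥ 1, so last is ≥ 1 -/
lemma last_pos_of_mem (I : List ℕ) (l : List ℕ) (hl : l ∈ borelGens I) (j : ℕ)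
    (hj : l.getLast? = some j) : 1 ≤ j := by
  obtain ⟨hlen, _, hb⟩ := hl
  have hne : l ≠ [] := by
    intro h; subst h; simp at hj
  have h1 : 0 < l.length := List.length_pos_iff.2 hne
  have := hb (l.length - 1) (by omega)
  rw [List.getD_eq_getElem l 0 (by omega)] at this
  have h2 : l.getLast hne = j := by
    rwa [List.getLast?_eq_getLast hne, Option.some_inj] at hj
  rw [List.getLast_eq_getElem] at h2
  omega

/-- last entry of a generator is at most the last entry of I -/
lemma last_le_of_mem (I : List ℕ) (l : List ℕ) (hl : l ∈ borelGens I) (j kI : ℕ)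
    (hj : l.getLast? = some j) (hkI : I.getLast? = some kI) : j ≤ kI := by
  obtain ⟨hlen, _, hb⟩ := hl
  have hne : l ≠ [] := by intro h; subst h; simp at hj
  have hIne : I ≠ [] := by intro h; subst h; simp at hkI
  have h1 : 0 < l.length := List.length_pos_iff.2 hne
  have := hb (l.length - 1) (by omega)
  rw [List.getD_eq_getElem l 0 (by omega),
    List.getD_eq_getElem I 0 (by omega)] at this
  have h2 : l.getLast hne = j := by
    rwa [List.getLast?_eq_getLast hne, Option.some_inj] at hj
  have h3 : I.getLast hIne = kI := by
    rwa [List.getLast?_eq_getLast hIne, Option.some_inj] at hkI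
  rw [List.getLast_eq_getElem] at h2 h3
  have hll : l.length - 1 = I.length - 1 := by omega
  simp only [hll] at this h2
  omega

lemma w_zero_of_last_lt (I : List ℕ) (kI : ℕ) (hkI : I.getLast? = some kI) (j : ℕ)
    (hj : kI < j) : w I j = 0 := by
  unfold w
  convert Set.ncard_empty (List ℕ)
  rw [Set.eq_empty_iff_forall_notMem]
  rintro l ⟨hl, hlast⟩
  have := last_le_of_mem I l hl j kI hlast hkI
  omega

lemma w_nil (j : ℕ) : w [] j = 0 := by
  unfold w
  convert Set.ncard_empty (List ℕ)
  rw [Set.eq_empty_iff_forall_notMem]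
  rintro l ⟨hl, hlast⟩
  rw [borelGens_nil] at hl
  subst hl
  simp at hlast

def Tset (I' : List ℕ) (j : ℕ) : Set (List ℕ) := {l' ∈ borelGens I' | ∀ a ∈ l'.getLast?, a ≤ j}

lemma w_append (I' : List ℕ) (k j : ℕ) (hj1 : 1 ≤ j) (hjk : j ≤ k) :
    w (I' ++ [k]) j = (Tset I' j).ncard := by
  unfold w
  have himg : {l ∈ borelGens (I' ++ [k]) | l.getLast? = some j} = (· ++ [j]) '' (Tset I' j) := by
    ext l
    constructor
    · rintro ⟨hl, hlast⟩
      have hlne : l ≠ [] := by intro h; subst h; simp at hlast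
      have hgl : l.getLast hlne = j := by
        rwa [List.getLast?_eq_getLast hlne, Option.some_inj] at hlast
      have hdl : l.dropLast ++ [j] = l := by
        rw [← hgl]; exact List.dropLast_append_getLast hlne
      refine ⟨l.dropLast, ?_, hdl⟩
      have h2 := (mem_borelGens_append I' k l.dropLast j).1 (by rwa [hdl])
      exact ⟨h2.1, h2.2.1⟩
    · rintro ⟨l', ⟨hl', hlast'⟩, rfl⟩
      exact ⟨(mem_borelGens_append I' k l' j).2 ⟨hl', hlast', hj1, hjk⟩, by simp⟩
  rw [himg, Set.ncard_image_of_injective _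
    (fun a b h => by simpa using (h : a ++ [j] = b ++ [j]))]

lemma Tset_card (I' : List ℕ) (hne : I' ≠ []) (j : ℕ) :
    (Tset I' j).ncard = ∑ j' ∈ Finset.Icc 1 j, w I' j' := by
  induction j with
  | zero =>
    have hemp : Tset I' 0 = ∅ := by
      rw [Set.eq_empty_iff_forall_notMem]
      rintro l ⟨hl, hlast⟩
      have hlne : l ≠ [] := by
        intro h
        subst h
        exact hne (List.length_eq_zero_iff.1 hl.1.symm)
      have hsome := List.getLast?_eq_getLast hlne
      have h1 := last_pos_of_mem I' l hl (l.getLast hlne) hsome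
      have h2 := hlast _ (by rw [hsome]; rfl)
      omega
    simp [hemp]
  | succ j ih =>
    have hsplit : Tset I' (j+1) = Tset I' j ∪ {l ∈ borelGens I' | l.getLast? = some (j+1)} := by
      ext l
      simp only [Tset, Set.mem_setOf_eq, Set.mem_union]
      constructor
      · rintro ⟨hl, hlast⟩
        have hlne : l ≠ [] := by
          intro h
          subst h
          exact hne (List.length_eq_zero_iff.1 hl.1.symm)
        have hsome := List.getLast?_eq_getLast hlne
        have h2 := hlast _ (by rw [hsome]; rfl)
        rcases Nat.lt_or_ge (l.getLast hlne) (j+1) with h | h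
        · left
          refine ⟨hl, fun a ha => ?_⟩
          rw [hsome] at ha
          simp at ha
          omega
        · right
          refine ⟨hl, ?_⟩
          rw [hsome]
          congr 1
          omega
      · rintro (⟨hl, hlast⟩ | ⟨hl, hlast⟩)
        · exact ⟨hl, fun a ha => le_trans (hlast a ha) (by omega)⟩
        · refine ⟨hl, fun a ha => ?_⟩
          rw [hlast] at ha
          simp at ha
          omega
    have hdisj : Disjoint (Tset I' j) {l ∈ borelGens I' | l.getLast? = some (j+1)} := by
      rw [Set.disjoint_left]
      rintro l ⟨-, h1⟩ ⟨-, h2⟩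
      have := h1 _ (by rw [h2]; rfl)
      omega
    have hfin1 : (Tset I' j).Finite := (borelGens_finite I').subset (fun l h => h.1)
    have hfin2 : {l ∈ borelGens I' | l.getLast? = some (j+1)}.Finite :=
      (borelGens_finite I').subset (fun l h => h.1)
    rw [hsplit, Set.ncard_union_eq hdisj hfin1 hfin2, ih,
      Finset.sum_Icc_succ_top (by omega)]
    rfl

lemma key_sum (r : ℕ) (j' k : ℕ) (h1 : 1 ≤ j') (h2 : j' ≤ k) :
    (j'-1).choose (r+1) + ∑ j ∈ Finset.Icc j' k, (j-1).choose r = k.choose (r+1) := by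
  induction k, h2 using Nat.le_induction with
  | base =>
    rw [Finset.Icc_self, Finset.sum_singleton]
    have hj : j' = (j'-1)+1 := by omega
    conv_rhs => rw [hj]
    rw [Nat.choose_succ_succ]
    simp only [Nat.succ_eq_add_one]
    omega
  | succ k hk ih =>
    rw [Finset.sum_Icc_succ_top (by omega), ← Nat.add_assoc, ih, Nat.choose_succ_succ]
    simp only [Nat.succ_eq_add_one, Nat.add_sub_cancel]
    omega

/-- Recursion for Betti numbers of principal Borel ideals:
`b_{i-1}(Borel(m)) + b_i(Borel(m/x_k)) = binom(k, i)·w_k(Borel(m))`,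
where `x_k = max(m)`. -/
theorem betti_recursion (n : ℕ) (I : List ℕ) (hI : I.Chain' (· ≤ ·))
    (hpos : ∀ x ∈ I, 1 ≤ x ∧ x ≤ n) (hne : I ≠ [])
    (k : ℕ) (hk : I.getLast? = some k) (i : ℕ) (hi : 1 ≤ i) :
    b n I (i - 1) + b n I.dropLast i = Nat.choose k i * w I k := by
  have hgl : I.getLast hne = k := by
    rwa [List.getLast?_eq_getLast hne, Option.some_inj] at hk
  have hkmem : k ∈ I := hgl ▸ List.getLast_mem hne
  obtain ⟨hk1, hkn⟩ := hpos k hkmem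
  have hI2 : I.dropLast ++ [k] = I := by rw [← hgl]; exact List.dropLast_append_getLast hne
  set I' := I.dropLast with hI'
  have hi' : i - 1 + 1 = i := by omega
  have hw : ∀ j, 1 ≤ j → j ≤ k → w I j = (Tset I' j).ncard := by
    intro j h1 h2
    rw [← hI2]
    exact w_append I' k j h1 h2
  have hw0 : ∀ j, k < j → w I j = 0 := fun j hj => w_zero_of_last_lt I k hk j hj
  have hlastI' : ∀ x ∈ I'.getLast?, x ≤ k := by
    have hch := hI
    rw [← hI2] at hch
    simp only [List.Chain'] at hch
    rw [List.isChain_append] at hch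
    intro x hx
    exact hch.2.2 x hx k (by simp)
  have hw'0 : ∀ j, k < j → w I' j = 0 := by
    intro j hj
    rcases eq_or_ne I' [] with h | h
    · rw [h]; exact w_nil j
    · have hsome := List.getLast?_eq_getLast h
      have hle : I'.getLast h ≤ k := hlastI' _ (by rw [hsome]; rfl)
      exact w_zero_of_last_lt I' _ hsome j (by omega)
  have hbI : b n I (i-1) = ∑ j ∈ Finset.Icc 1 k, (j-1).choose (i-1) * w I j := by
    unfold b
    refine (Finset.sum_subset (Finset.Icc_subset_Icc_right hkn) ?_).symm
    intro x hx hx'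
    simp only [Finset.mem_Icc] at hx hx'
    rw [hw0 x (by omega), Nat.mul_zero]
  have hbI' : b n I' i = ∑ j ∈ Finset.Icc 1 k, (j-1).choose i * w I' j := by
    unfold b
    refine (Finset.sum_subset (Finset.Icc_subset_Icc_right hkn) ?_).symm
    intro x hx hx'
    simp only [Finset.mem_Icc] at hx hx'
    rw [hw'0 x (by omega), Nat.mul_zero]
  rcases eq_or_ne I' [] with hnil | hnil
  · have hT : ∀ j, (Tset I' j).ncard = 1 := by
      intro j
      have hT1 : Tset I' j = {[]} := by
        rw [hnil]
        ext l
        simp only [Tset, borelGens_nil, Set.mem_setOf_eq, Set.mem_singleton_iff]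
        constructor
        · rintro ⟨h, -⟩; exact h
        · rintro rfl; simp
      rw [hT1, Set.ncard_singleton]
    have hb2 : b n I' i = 0 := by
      rw [hbI', hnil]
      apply Finset.sum_eq_zero
      intro j hj
      rw [w_nil j, Nat.mul_zero]
    rw [hbI, hb2, Nat.add_zero, hw k hk1 le_rfl, hT k, Nat.mul_one]
    have hcongr : ∀ j ∈ Finset.Icc 1 k, (j-1).choose (i-1) * w I j = (j-1).choose (i-1) := by
      intro j hj
      simp only [Finset.mem_Icc] at hj
      rw [hw j hj.1 hj.2, hT j, Nat.mul_one]
    rw [Finset.sum_congr rfl hcongr]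
    have hks := key_sum (i-1) 1 k le_rfl hk1
    simp only [hi'] at hks
    have h0 : Nat.choose (1-1) i = 0 := Nat.choose_eq_zero_of_lt hi
    omega
  · have hT : ∀ j, (Tset I' j).ncard = ∑ j' ∈ Finset.Icc 1 j, w I' j' := Tset_card I' hnil
    rw [hbI, hbI']
    have hstep1 : ∀ j ∈ Finset.Icc 1 k,
        (j-1).choose (i-1) * w I j = ∑ j' ∈ Finset.Icc 1 j, (j-1).choose (i-1) * w I' j' := by
      intro j hj
      simp only [Finset.mem_Icc] at hj
      rw [hw j hj.1 hj.2, hT j, Finset.mul_sum]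
    rw [Finset.sum_congr rfl hstep1]
    have hswap : ∑ j ∈ Finset.Icc 1 k, ∑ j' ∈ Finset.Icc 1 j, (j-1).choose (i-1) * w I' j'
        = ∑ j' ∈ Finset.Icc 1 k, ∑ j ∈ Finset.Icc j' k, (j-1).choose (i-1) * w I' j' := by
      refine Finset.sum_comm' ?_
      intro x y
      simp only [Finset.mem_Icc]
      omega
    rw [hswap, ← Finset.sum_add_distrib]
    have hfinal : ∀ j' ∈ Finset.Icc 1 k,
        (∑ j ∈ Finset.Icc j' k, (j-1).choose (i-1) * w I' j') + (j'-1).choose i * w I' j'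
          = k.choose i * w I' j' := by
      intro j' hj'
      simp only [Finset.mem_Icc] at hj'
      rw [← Finset.sum_mul]
      rw [← Nat.add_mul]
      congr 1
      have := key_sum (i-1) j' k hj'.1 hj'.2
      rw [hi'] at this
      omega
    rw [Finset.sum_congr rfl hfinal, ← Finset.mul_sum, hw k hk1 le_rfl, hT k]
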